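/- arXiv:2211.03429 — 2 statements merged into one kernel-verified Lean document; each statement's English description precedes it below -/
import Mathlib

section
/- Let V be a finite-dimensional real inner product space, let n ≥ 1, and let f₁, …, fₙ : V → ℝ be differentiable, strictly convex functions. Assume that for every nonempty subset I ⊆ {1, …, n} and every point z ∈ V there exists a point y ≠ z with fᵢ(y) = fᵢ(z) for all i ∈ I (no common level set of any nonempty subfamily is a single point). Then for every x ∈ V there exists a vector v ∈ V such that ⟪∇fᵢ(x), v⟫ > 0 for every i ∈ {1, …, n}; that is, all the functions fᵢ can be simultaneously increased to first order at every point of V. -/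
open RealInnerProductSpace

/-- First-order condition: a differentiable convex function lies above its tangent plane. -/
lemma convexOn_grad_ineq {V : Type*} [NormedAddCommGroup V] [InnerProductSpace ℝ V]
    [FiniteDimensional ℝ V] (f : V → ℝ) (hd : Differentiable ℝ f)
    (hc : ConvexOn ℝ Set.univ f) (x y : V) :
    f x + ⟪gradient f x, y - x⟫ ≤ f y := by
  rcases eq_or_ne y x with rfl | hne
  · simp
  · set g : ℝ → ℝ := fun t => f (x + t • (y - x)) with hg
    have hkey : (f ∘ (AffineMap.lineMap x y : ℝ →ᵃ[ℝ] V)) = g := by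
      funext t
      simp only [Function.comp_apply, hg, AffineMap.lineMap_apply_module]
      congr 1
      module
    have hgc : ConvexOn ℝ Set.univ g := by
      have h := hc.comp_affineMap (AffineMap.lineMap x y : ℝ →ᵃ[ℝ] V)
      rw [hkey] at h
      simpa using h
    have hA : HasDerivAt (fun t : ℝ => x + t • (y - x)) (y - x) 0 := by
      simpa using (((hasDerivAt_id (0:ℝ)).smul_const (y - x)).const_add x)
    have hfd : HasFDerivAt f (fderiv ℝ f x) (x + (0:ℝ) • (y - x)) := by
      simpa using (hd x).hasFDerivAt
    have hg0 : HasDerivAt g (fderiv ℝ f x (y - x)) 0 := hfd.comp_hasDerivAt 0 hA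
    have hslope := hgc.le_slope_of_hasDerivAt (Set.mem_univ (0:ℝ)) (Set.mem_univ (1:ℝ))
      one_pos hg0
    have hsl : slope g 0 1 = g 1 - g 0 := by simp [slope_def_field]
    have hg1 : g 1 = f y := by simp [hg]
    have hg0' : g 0 = f x := by simp [hg]
    have hinner : ⟪gradient f x, y - x⟫ = fderiv ℝ f x (y - x) :=
      InnerProductSpace.toDual_symm_apply
    rw [hinner]
    rw [hsl, hg1, hg0'] at hslope
    linarith

/-- If `f₁, …, fₙ` are differentiable strictly convex functions on a
finite-dimensional real inner product space such that no common level set of a nonempty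
subfamily is a single point, then at every point there is a direction in which all the
functions increase to first order. -/
theorem simultaneous_increase_of_strictlyConvex
    {V : Type*} [NormedAddCommGroup V] [InnerProductSpace ℝ V] [FiniteDimensional ℝ V]
    (n : ℕ) (hn : 1 ≤ n) (f : Fin n → V → ℝ)
    (hdiff : ∀ i, Differentiable ℝ (f i))
    (hconv : ∀ i, StrictConvexOn ℝ Set.univ (f i))
    (hlevel : ∀ I : Finset (Fin n), I.Nonempty → ∀ z : V,
      ∃ y : V, y ≠ z ∧ ∀ i ∈ I, f i y = f i z) :
    ∀ x : V, ∃ v : V, ∀ i, 0 < ⟪gradient (f i) x, v⟫ := by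
  intro x
  set g : Fin n → V := fun i => gradient (f i) x with hgdef
  by_cases h0 : (0 : V) ∈ convexHull ℝ (Set.range g)
  · -- derive a contradiction
    exfalso
    rw [convexHull_range_eq_exists_affineCombination] at h0
    obtain ⟨s, w, hw0, hw1, hcomb⟩ := h0
    rw [s.affineCombination_eq_linear_combination g w hw1] at hcomb
    set I : Finset (Fin n) := s.filter (fun i => w i ≠ 0) with hI
    have hwI : ∀ i ∈ I, 0 < w i := by
      intro i hi
      rw [hI, Finset.mem_filter] at hi
      exact lt_of_le_of_ne (hw0 i hi.1) (Ne.symm hi.2)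
    have hsumI : ∑ i ∈ I, w i = 1 := by
      rw [hI, Finset.sum_filter_ne_zero]; exact hw1
    have hcombI : ∑ i ∈ I, w i • g i = 0 := by
      rw [hI]
      rw [Finset.sum_filter_of_ne (fun i _ h => by
        intro hw; rw [hw, zero_smul] at h; exact h rfl)]
      exact hcomb
    have hInone : I.Nonempty := by
      by_contra h
      rw [Finset.not_nonempty_iff_eq_empty] at h
      rw [h, Finset.sum_empty] at hsumI
      norm_num at hsumI
    obtain ⟨y, hyx, hfy⟩ := hlevel I hInone x
    set m : V := (1/2 : ℝ) • y + (1/2 : ℝ) • x with hm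
    -- strict convexity: f i m < f i x for all i ∈ I
    have hstrict : ∀ i ∈ I, f i m < f i x := by
      intro i hi
      have := (hconv i).2 (Set.mem_univ y) (Set.mem_univ x) hyx
        (by norm_num : (0:ℝ) < 1/2) (by norm_num : (0:ℝ) < 1/2) (by norm_num)
      rw [hfy i hi] at this
      rw [hm]
      calc f i ((1/2:ℝ) • y + (1/2:ℝ) • x) < (1/2:ℝ) * f i x + (1/2:ℝ) * f i x := this
        _ = f i x := by ring
    -- gradient inequality: f i x + ⟪g i, m - x⟫ ≤ f i m
    have hgrad : ∀ i, f i x + ⟪g i, m - x⟫ ≤ f i m := by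
      intro i
      exact convexOn_grad_ineq (f i) (hdiff i) (hconv i).convexOn x m
    -- sum up over I with weights w
    have hsum1 : ∑ i ∈ I, w i * f i m < ∑ i ∈ I, w i * f i x := by
      apply Finset.sum_lt_sum_of_nonempty hInone
      intro i hi
      exact mul_lt_mul_of_pos_left (hstrict i hi) (hwI i hi)
    have hsum2 : ∑ i ∈ I, w i * f i x ≤ ∑ i ∈ I, w i * f i m := by
      have h1 : ∀ i ∈ I, w i * (f i x + ⟪g i, m - x⟫) ≤ w i * f i m := fun i hi =>
        mul_le_mul_of_nonneg_left (hgrad i) (hwI i hi).le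
      have h2 : ∑ i ∈ I, w i * (f i x + ⟪g i, m - x⟫) ≤ ∑ i ∈ I, w i * f i m :=
        Finset.sum_le_sum h1
      have h3 : ∑ i ∈ I, w i * (f i x + ⟪g i, m - x⟫)
          = ∑ i ∈ I, w i * f i x + ⟪∑ i ∈ I, w i • g i, m - x⟫ := by
        rw [sum_inner, ← Finset.sum_add_distrib]
        apply Finset.sum_congr rfl
        intro i _
        rw [mul_add, real_inner_smul_left]
      rw [h3, hcombI, inner_zero_left, add_zero] at h2
      exact h2
    linarith
  · -- separation: find v
    have hfin : (Set.range g).Finite := Set.finite_range g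
    have hconvhull : Convex ℝ (convexHull ℝ (Set.range g)) := convex_convexHull ℝ _
    have hclosed : IsClosed (convexHull ℝ (Set.range g)) :=
      (hfin.isCompact_convexHull (𝕜 := ℝ)).isClosed
    obtain ⟨F, u, hF0, hFb⟩ := geometric_hahn_banach_point_closed hconvhull hclosed h0
    refine ⟨(InnerProductSpace.toDual ℝ V).symm F, fun i => ?_⟩
    have hFi : u < F (g i) := hFb (g i) (subset_convexHull ℝ _ ⟨i, rfl⟩)
    have h0u : (0:ℝ) < u := by simpa using hF0
    have : ⟪(InnerProductSpace.toDual ℝ V).symm F, g i⟫ = F (g i) :=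
      InnerProductSpace.toDual_symm_apply
    rw [real_inner_comm, this]
    linarith
end

section
/- Let E be a finite-dimensional real inner product space and let Γ be a subgroup of the group of affine isometric equivalences of E. Let X : E → E be a locally Lipschitz vector field that is Γ-equivariant, meaning X(γ(x)) = Lγ(X(x)) for every γ ∈ Γ and x ∈ E, where Lγ denotes the linear part of the affine isometry γ. Suppose there is a compact set K ⊆ E with {x ∈ E : X(x) ≠ 0} ⊆ ⋃_{γ ∈ Γ} γ(K) (the support of X is compact modulo the action of Γ). Then the flow of X is complete: for every x₀ ∈ E there exists a curve f : ℝ → E with f(0) = x₀ and, for every t ∈ ℝ, f'(t) = X(f(t)). -/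
open Set Filter Metric Topology
open scoped NNReal

open Set Filter Metric Topology
open scoped NNReal

/-- Global flow for globally Lipschitz, bounded vector fields. -/
theorem global_flow_of_lipschitz {E : Type*} [NormedAddCommGroup E] [NormedSpace ℝ E]
    [CompleteSpace E] (X : E → E) (L : ℝ≥0) (hL : LipschitzWith L X)
    (M : ℝ) (hM : ∀ x, ‖X x‖ ≤ M) (x₀ : E) :
    ∃ f : ℝ → E, f 0 = x₀ ∧ ∀ t : ℝ, HasDerivAt f (X (f t)) t := by
  have hM0 : 0 ≤ M := (norm_nonneg _).trans (hM x₀)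
  -- for each n, a solution on Icc (-(n+1)) (n+1)
  have hsol : ∀ n : ℕ, ∃ f : ℝ → E, f 0 = x₀ ∧
      ∀ t ∈ Icc (-(n+1:ℝ)) (n+1), HasDerivWithinAt f (X (f t)) (Icc (-(n+1:ℝ)) (n+1)) t := by
    intro n
    have hpl : IsPicardLindelof (fun _ : ℝ => X) (tmin := -(n+1:ℝ)) (tmax := n+1)
        ⟨0, neg_nonpos.mpr (by positivity), by positivity⟩ x₀ (M.toNNReal * (n+1)) 0
        M.toNNReal L :=
      { lipschitzOnWith := fun t _ => hL.lipschitzOnWith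
        continuousOn := fun x _ => continuousOn_const
        norm_le := fun t _ x _ => (hM x).trans (Real.le_coe_toNNReal M)
        mul_max_le := by
          have : max ((n+1:ℝ) - 0) (0 - -(n+1)) = (n+1:ℝ) := by
            rw [sub_zero, zero_sub, neg_neg, max_self]
          show (M.toNNReal : ℝ) * max ((n+1:ℝ) - 0) (0 - -(n+1)) ≤ _
          rw [this]
          simp }
    exact hpl.exists_eq_forall_mem_Icc_hasDerivWithinAt₀
  choose f hf0 hf using hsol
  -- interior derivative
  have hderiv : ∀ n : ℕ, ∀ t ∈ Ioo (-(n+1:ℝ)) (n+1), HasDerivAt (f n) (X (f n t)) t := by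
    intro n t ht
    exact (hf n t (Ioo_subset_Icc_self ht)).hasDerivAt (Icc_mem_nhds ht.1 ht.2)
  -- agreement
  have hagree : ∀ m n : ℕ, m ≤ n → EqOn (f m) (f n) (Icc (-(m+1:ℝ)) (m+1)) := by
    intro m n hmn
    have hsub : Ioo (-(m+1:ℝ)) (m+1) ⊆ Ioo (-(n+1:ℝ)) (n+1) := by
      apply Ioo_subset_Ioo <;> · linarith [(Nat.cast_le (α := ℝ)).mpr hmn]
    have hcont : ∀ k : ℕ, ContinuousOn (f k) (Icc (-(k+1:ℝ)) (k+1)) := fun k =>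
      fun t ht => (hf k t ht).continuousWithinAt
    refine ODE_solution_unique_of_mem_Icc (v := fun _ : ℝ => X) (s := fun _ => univ)
      (fun t _ => hL.lipschitzOnWith) ?_ (hcont m) (fun t ht => hderiv m t ht)
      (fun _ _ => mem_univ _) ((hcont n).mono (Icc_subset_Icc ?_ ?_))
      (fun t ht => hderiv n t (hsub ht)) (fun _ _ => mem_univ _)
      (by rw [hf0 m, hf0 n])
    · exact ⟨neg_lt_zero.mpr (by positivity), by positivity⟩
    · linarith [(Nat.cast_le (α := ℝ)).mpr hmn]
    · linarith [(Nat.cast_le (α := ℝ)).mpr hmn]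
  -- glue
  refine ⟨fun t => f ⌊|t|⌋₊ t, by simpa using hf0 0, fun t => ?_⟩
  set n := ⌊|t|⌋₊ with hn
  have htn : |t| < (n:ℝ) + 1 := Nat.lt_floor_add_one _
  have hmem : t ∈ Ioo (-(n+1:ℝ)) (n+1) := by
    rw [abs_lt] at htn; exact ⟨by linarith [htn.1], by linarith [htn.2]⟩
  have heq : (fun s => f ⌊|s|⌋₊ s) =ᶠ[𝓝 t] f n := by
    have hopen : IsOpen {s : ℝ | |s| < (n:ℝ) + 1} := isOpen_lt (by fun_prop) continuous_const
    filter_upwards [hopen.mem_nhds htn] with s hs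
    have h1 : ⌊|s|⌋₊ ≤ n := by
      have : ⌊|s|⌋₊ < n + 1 := by
        rw [Nat.floor_lt (abs_nonneg s)]
        exact_mod_cast hs
      omega
    have h2 : s ∈ Icc (-(⌊|s|⌋₊+1:ℝ)) (⌊|s|⌋₊+1) := by
      have h := (Nat.lt_floor_add_one |s|).le
      rw [abs_le] at h
      exact ⟨by linarith [h.1], h.2⟩
    exact hagree _ n h1 h2
  have : HasDerivAt (f n) (X (f n t)) t := hderiv n t hmem
  exact this.congr_of_eventuallyEq heq

/-- A locally Lipschitz vector field on a finite-dimensional real inner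
product space that is equivariant under a subgroup `Γ` of affine isometric equivalences
and whose support is compact modulo the action of `Γ` generates a complete flow. -/
theorem complete_flow_of_equivariant_support_compact_mod_group
    {E : Type*} [NormedAddCommGroup E] [InnerProductSpace ℝ E] [FiniteDimensional ℝ E]
    (Γ : Subgroup (E ≃ᵃⁱ[ℝ] E))
    (X : E → E) (hX : LocallyLipschitz X)
    (hequiv : ∀ γ ∈ Γ, ∀ x : E, X (γ x) = γ.linearIsometryEquiv (X x))
    (K : Set E) (hK : IsCompact K)
    (hsupp : {x : E | X x ≠ 0} ⊆ ⋃ γ ∈ Γ, (γ : E ≃ᵃⁱ[ℝ] E) '' K) :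
    ∀ x₀ : E, ∃ f : ℝ → E, f 0 = x₀ ∧ ∀ t : ℝ, HasDerivAt f (X (f t)) t := by
  -- bound on K
  obtain ⟨C₀, hC₀⟩ := hK.exists_bound_of_continuousOn (hX.continuous.continuousOn (s := K))
  set M : ℝ := max C₀ 0 with hMdef
  -- global bound
  have hbound : ∀ x : E, ‖X x‖ ≤ M := by
    intro x
    by_cases hx : X x = 0
    · simp [hx, hMdef]
    · obtain ⟨γ, hγΓ, k, hk, hγk⟩ := by simpa using hsupp hx
      have := hequiv γ hγΓ k
      rw [hγk] at this
      rw [this, γ.linearIsometryEquiv.norm_map]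
      exact (hC₀ k hk).trans (le_max_left _ _)
  -- global Lipschitz
  have hglip : ∃ L : ℝ≥0, LipschitzWith L X := by
    by_contra hcon
    push_neg at hcon
    -- for each n, bad pair with first point in K
    have hbad : ∀ n : ℕ, ∃ a b : E, a ∈ K ∧ (n : ℝ) * dist a b < dist (X a) (X b) := by
      intro n
      have := hcon n
      rw [lipschitzWith_iff_dist_le_mul] at this
      push_neg at this
      obtain ⟨x, y, hxy⟩ := this
      have hne : X x ≠ X y := by
        intro h
        rw [h, dist_self] at hxy
        exact absurd hxy (not_lt.mpr (by positivity))
      -- wlog X x ≠ 0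
      have key : ∀ u v : E, X u ≠ 0 → ((n : ℝ≥0) : ℝ) * dist u v < dist (X u) (X v) →
          ∃ a b : E, a ∈ K ∧ (n : ℝ) * dist a b < dist (X a) (X b) := by
        intro u v hu huv
        obtain ⟨γ, hγΓ, k, hk, hγk⟩ := by simpa using hsupp hu
        refine ⟨k, γ⁻¹ v, hk, ?_⟩
        have hinv : (γ⁻¹ : E ≃ᵃⁱ[ℝ] E) = γ.symm := by
          ext z; rw [AffineIsometryEquiv.coe_inv]
        have hk' : k = γ.symm u := by rw [← hγk, AffineIsometryEquiv.symm_apply_apply]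
        have hXu : X u = γ.linearIsometryEquiv (X k) := by
          rw [← hγk]; exact hequiv γ hγΓ k
        have hXv : X v = γ.linearIsometryEquiv (X (γ⁻¹ v)) := by
          conv_lhs => rw [show v = γ (γ⁻¹ v) by rw [hinv]; simp]
          exact hequiv γ hγΓ _
        have hd1 : dist (X k) (X (γ⁻¹ v)) = dist (X u) (X v) := by
          rw [hXu, hXv, γ.linearIsometryEquiv.dist_map]
        have hd2 : dist k (γ⁻¹ v) = dist u v := by
          rw [hk', hinv, γ.symm.dist_map]
        rw [hd1, hd2]
        exact_mod_cast huv
      rcases eq_or_ne (X x) 0 with h0 | h0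
      · refine key y x ?_ (by rwa [dist_comm, dist_comm (X y)])
        rw [h0] at hne; exact fun h => hne h.symm
      · exact key x y h0 hxy
    choose a b ha hab using hbad
    obtain ⟨z, hz, φ, hφ, hφz⟩ := hK.tendsto_subseq ha
    obtain ⟨C, t, ht, hlip⟩ := hX z
    obtain ⟨ε, hε, hball⟩ := Metric.mem_nhds_iff.mp ht
    have hφtop : Tendsto (fun n => ((φ n : ℕ) : ℝ)) atTop atTop :=
      tendsto_natCast_atTop_atTop.comp hφ.tendsto_atTop
    -- dist a b small
    have hdsmall : ∀ n : ℕ, 1 ≤ φ n → dist (a (φ n)) (b (φ n)) < 2 * M / (φ n) := by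
      intro n hn
      have h1 : (φ n : ℝ) * dist (a (φ n)) (b (φ n)) < 2 * M := by
        refine (hab (φ n)).trans_le ?_
        calc dist (X (a (φ n))) (X (b (φ n))) ≤ ‖X (a (φ n))‖ + ‖X (b (φ n))‖ :=
              dist_le_norm_add_norm _ _
          _ ≤ M + M := add_le_add (hbound _) (hbound _)
          _ = 2 * M := by ring
      have hpos : (0 : ℝ) < φ n := by exact_mod_cast hn
      rw [lt_div_iff₀ hpos, mul_comm]
      exact h1
    have h2M : Tendsto (fun n => 2 * M / ((φ n : ℕ) : ℝ)) atTop (𝓝 0) :=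
      Tendsto.div_atTop tendsto_const_nhds hφtop
    have hev1 : ∀ᶠ n in atTop, dist (a (φ n)) z < ε / 2 :=
      (Metric.tendsto_nhds.mp hφz _ (by positivity))
    have hev2 : ∀ᶠ n in atTop, 2 * M / ((φ n : ℕ) : ℝ) < ε / 2 :=
      (h2M.eventually (gt_mem_nhds (by positivity)))
    have hev3 : ∀ᶠ n in atTop, (C : ℝ) ≤ (φ n : ℝ) := hφtop.eventually_ge_atTop _
    have hev4 : ∀ᶠ n in atTop, 1 ≤ φ n := hφ.tendsto_atTop.eventually_ge_atTop 1
    obtain ⟨n, h1, h2, h3, h4⟩ := (hev1.and (hev2.and (hev3.and hev4))).exists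
    have hA : a (φ n) ∈ ball z ε := by
      rw [mem_ball]; exact h1.trans (half_lt_self hε)
    have hab' : dist (a (φ n)) (b (φ n)) < ε / 2 := (hdsmall n h4).trans h2
    have hB : b (φ n) ∈ ball z ε := by
      rw [mem_ball]
      calc dist (b (φ n)) z ≤ dist (b (φ n)) (a (φ n)) + dist (a (φ n)) z :=
            dist_triangle _ _ _
        _ < ε / 2 + ε / 2 := by rw [dist_comm (b (φ n))]; exact add_lt_add hab' h1
        _ = ε := by ring
    have hle : dist (X (a (φ n))) (X (b (φ n))) ≤ (C : ℝ) * dist (a (φ n)) (b (φ n)) :=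
      hlip.dist_le_mul _ (hball hA) _ (hball hB)
    have hlt := hab (φ n)
    have hd0 : (0 : ℝ) ≤ dist (a (φ n)) (b (φ n)) := dist_nonneg
    nlinarith [mul_le_mul_of_nonneg_right h3 hd0]
  obtain ⟨L, hL⟩ := hglip
  exact global_flow_of_lipschitz X L hL M hbound
end
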